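/- (Persson's formula) Let w be a circular word with s copies of S and t copies of T, representing the circular ordering of two samples of sizes s and t. Then Watson's two-sample statistic satisfies (st(s+t)/2)·U²_{st} = st(st+2)/24 − (#STST(w)+#TSTS(w))/2, where the subsequence counts are taken in any linear representative of w (they are rotation-invariant). -/

import Mathlib

inductive Letter | S | T
deriving DecidableEq, Repr

open Letter

/-- Number of occurrences of `u` as a (not necessarily contiguous) subsequence of `w`. -/
def cnt (u w : List Letter) : ℕ := w.sublists.count u

lemma count_eq_countP' (u : List Letter) (L : List (List Letter)) :
    L.count u = L.countP (fun l => decide (l = u)) := by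
  induction L with
  | nil => rfl
  | cons a L ih =>
      rw [List.count_cons, List.countP_cons, ih]
      congr 1
      by_cases h : a = u
      · simp [h]
      · simp [h, Ne.symm h]

lemma cnt_P (u w : List Letter) : cnt u w = w.sublists'.countP (fun l => decide (l = u)) :=
  (count_eq_countP' u w.sublists).trans ((List.sublists_perm_sublists' w).countP_eq _)

lemma cnt_nil_left (w : List Letter) : cnt [] w = 1 := by
  rw [cnt_P]
  induction w with
  | nil => rfl
  | cons x w ih =>
      rw [List.sublists'_cons, List.countP_append, ih, List.countP_map]
      simp [Function.comp]

lemma cnt_cons (x y : Letter) (v w : List Letter) :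
    cnt (y :: v) (x :: w) = cnt (y :: v) w + if y = x then cnt v w else 0 := by
  rw [cnt_P, cnt_P, List.sublists'_cons, List.countP_append, List.countP_map]
  congr 1
  by_cases h : y = x
  · subst h
    rw [if_pos rfl, cnt_P]
    apply List.countP_congr
    intro l _
    simp [Function.comp]
  · rw [if_neg h]
    apply List.countP_eq_zero.2
    intro l _
    simp only [Function.comp]
    simp [h, Ne.symm h]

def A1 (w : List Letter) : ℚ := ∑ k ∈ Finset.range w.length, ((w.take (k+1)).count S : ℚ)

def A2 (w : List Letter) : ℚ := ∑ k ∈ Finset.range w.length, ((w.take (k+1)).count S : ℚ) ^ 2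

def A3 (w : List Letter) : ℚ :=
  ∑ k ∈ Finset.range w.length, ((k : ℚ) + 1) * ((w.take (k+1)).count S : ℚ)

lemma A1_def (w : List Letter) :
    A1 w = ∑ k ∈ Finset.range w.length, ((w.take (k+1)).count S : ℚ) := rfl
lemma A2_def (w : List Letter) :
    A2 w = ∑ k ∈ Finset.range w.length, ((w.take (k+1)).count S : ℚ) ^ 2 := rfl
lemma A3_def (w : List Letter) :
    A3 w = ∑ k ∈ Finset.range w.length, ((k : ℚ) + 1) * ((w.take (k+1)).count S : ℚ) := rfl

lemma sum_shift (n : ℕ) (f : ℕ → ℚ) (h0 : f 0 = 0) :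
    ∑ k ∈ Finset.range (n+1), f k = ∑ k ∈ Finset.range n, f (k+1) := by
  rw [Finset.sum_range_succ', h0, add_zero]

lemma gauss (m : ℕ) : ∑ k ∈ Finset.range m, ((k : ℚ) + 1) = (m : ℚ) * (m + 1) / 2 := by
  induction m with
  | zero => simp
  | succ m ih => rw [Finset.sum_range_succ, ih]; push_cast; ring

lemma gauss2 (m : ℕ) :
    ∑ k ∈ Finset.range m, ((k : ℚ) + 1) ^ 2 = (m : ℚ) * (m + 1) * (2 * m + 1) / 6 := by
  induction m with
  | zero => simp
  | succ m ih => rw [Finset.sum_range_succ, ih]; push_cast; ring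

lemma count_take_cons (x : Letter) (w : List Letter) (k : ℕ) :
    (((x :: w).take (k+1)).count S : ℚ)
      = ((w.take k).count S : ℚ) + (if x = S then 1 else 0) := by
  rw [List.take_succ_cons, List.count_cons]
  cases x <;> simp

lemma hg0 (w : List Letter) :
    ∑ k ∈ Finset.range (w.length + 1), ((w.take k).count S : ℚ) = A1 w :=
  sum_shift _ _ (by simp)

lemma hg1 (w : List Letter) :
    ∑ k ∈ Finset.range (w.length + 1), (k : ℚ) * ((w.take k).count S : ℚ) = A3 w := by
  rw [sum_shift _ (fun k => (k : ℚ) * ((w.take k).count S : ℚ)) (by simp)]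
  rw [A3_def]
  push_cast
  rfl

lemma hg2 (w : List Letter) :
    ∑ k ∈ Finset.range (w.length + 1), ((w.take k).count S : ℚ) ^ 2 = A2 w :=
  sum_shift _ _ (by simp)

lemma A1_cons (x : Letter) (w : List Letter) :
    A1 (x :: w) = A1 w + (if x = S then (w.length : ℚ) + 1 else 0) := by
  rw [A1_def (x :: w), List.length_cons,
    Finset.sum_congr rfl (fun k _ => count_take_cons x w k),
    Finset.sum_add_distrib, hg0, Finset.sum_const, Finset.card_range, nsmul_eq_mul]
  cases x <;> simp

lemma A2_cons (x : Letter) (w : List Letter) :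
    A2 (x :: w) = A2 w + (if x = S then (w.length : ℚ) + 1 + 2 * A1 w else 0) := by
  have expand : ∀ k : ℕ, (((x :: w).take (k+1)).count S : ℚ) ^ 2
      = ((w.take k).count S : ℚ) ^ 2
        + ((if x = S then (1:ℚ) else 0) * (2 * ((w.take k).count S : ℚ)) +
           (if x = S then (1:ℚ) else 0)) := by
    intro k
    rw [count_take_cons]
    cases x <;> simp <;> ring
  rw [A2_def (x :: w), List.length_cons,
    Finset.sum_congr rfl (fun k _ => expand k),
    Finset.sum_add_distrib, hg2, Finset.sum_add_distrib, Finset.sum_const,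
    Finset.card_range, nsmul_eq_mul, ← Finset.mul_sum, ← Finset.mul_sum, hg0]
  cases x <;> simp <;> push_cast <;> ring

lemma A3_cons (x : Letter) (w : List Letter) :
    A3 (x :: w) = A3 w + A1 w
      + (if x = S then ((w.length : ℚ) + 1) * ((w.length : ℚ) + 2) / 2 else 0) := by
  have expand : ∀ k : ℕ, ((k : ℚ) + 1) * (((x :: w).take (k+1)).count S : ℚ)
      = ((k : ℚ) * ((w.take k).count S : ℚ) + ((w.take k).count S : ℚ))
        + (if x = S then (1:ℚ) else 0) * ((k : ℚ) + 1) := by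
    intro k
    rw [count_take_cons]
    cases x <;> simp <;> ring
  rw [A3_def (x :: w), List.length_cons,
    Finset.sum_congr rfl (fun k _ => expand k),
    Finset.sum_add_distrib, Finset.sum_add_distrib, hg1, hg0,
    ← Finset.mul_sum, gauss]
  cases x
  · simp; push_cast; left; ring
  · simp

lemma key (w : List Letter) :
    ((cnt [S] w : ℚ) = (w.count S : ℚ))
  ∧ ((cnt [T] w : ℚ) = (w.length : ℚ) - (w.count S : ℚ))
  ∧ ((cnt [S,T] w : ℚ) = A1 w - (w.count S : ℚ) * ((w.count S : ℚ) + 1) / 2)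
  ∧ ((cnt [T,S] w : ℚ) = (w.count S : ℚ) * ((w.length : ℚ) - (w.count S : ℚ)) - A1 w + (w.count S : ℚ) * ((w.count S : ℚ) + 1) / 2)
  ∧ ((cnt [S,T,S] w : ℚ) = (w.count S : ℚ) * A1 w - (w.count S : ℚ)^2 * ((w.count S : ℚ) + 1) / 2 - A2 w + (w.count S : ℚ)^2 + (w.count S : ℚ) * ((w.count S : ℚ) - 1) * (2 * (w.count S : ℚ) - 1) / 6)
  ∧ ((cnt [T,S,T] w : ℚ) = ((w.length : ℚ) - (w.count S : ℚ)) * ((w.count S : ℚ) * ((w.length : ℚ) - (w.count S : ℚ)) - A1 w + (w.count S : ℚ) * ((w.count S : ℚ) + 1) / 2) - ((w.length : ℚ) * ((w.length : ℚ) + 1) * (2 * (w.length : ℚ) + 1) / 6 - 2 * A3 w + A2 w - ((w.length : ℚ) - (w.count S : ℚ))^2) + ((w.length : ℚ) - (w.count S : ℚ)) * (((w.length : ℚ) - (w.count S : ℚ)) - 1) * (2 * ((w.length : ℚ) - (w.count S : ℚ)) - 1) / 6)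
  ∧ ((cnt [S,T,S,T] w : ℚ) + (cnt [T,S,T,S] w : ℚ) = (w.count S : ℚ) * ((w.length : ℚ) - (w.count S : ℚ)) * ((w.count S : ℚ) * ((w.length : ℚ) - (w.count S : ℚ)) + 2) / 12 + (A1 w)^2 - (w.count S : ℚ) * ((w.length : ℚ) + 1) * A1 w + (w.count S : ℚ)^2 * ((w.length : ℚ) + 1)^2 / 4 - (w.length : ℚ) * A2 w + 2 * (w.count S : ℚ) * A3 w - (w.count S : ℚ)^2 * ((w.length : ℚ) + 1) * (2 * (w.length : ℚ) + 1) / 6) := by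
  induction w with
  | nil =>
      refine ⟨?_, ?_, ?_, ?_, ?_, ?_, ?_⟩ <;>
        simp [cnt, A1_def, A2_def, A3_def]
  | cons x w ih =>
      obtain ⟨h1, h2, h3, h4, h5, h6, h7⟩ := ih
      cases x
      · have hc : (((S :: w).count S : ℚ)) = (w.count S : ℚ) + (if S = S then 1 else 0) := by
          cases S <;> simp [List.count_cons]
        refine ⟨?_, ?_, ?_, ?_, ?_, ?_, ?_⟩
        · simp only [cnt_cons, cnt_nil_left, List.length_cons, hc,
            A1_cons, A2_cons, A3_cons, reduceIte]
          push_cast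
          linear_combination h1
        · simp only [cnt_cons, cnt_nil_left, List.length_cons, hc,
            A1_cons, A2_cons, A3_cons, reduceIte]
          push_cast
          linear_combination h2
        · simp only [cnt_cons, cnt_nil_left, List.length_cons, hc,
            A1_cons, A2_cons, A3_cons, reduceIte]
          push_cast
          linear_combination h3 + h2
        · simp only [cnt_cons, cnt_nil_left, List.length_cons, hc,
            A1_cons, A2_cons, A3_cons, reduceIte]
          push_cast
          linear_combination h4
        · simp only [cnt_cons, cnt_nil_left, List.length_cons, hc,
            A1_cons, A2_cons, A3_cons, reduceIte]
          push_cast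
          linear_combination h5 + h4
        · simp only [cnt_cons, cnt_nil_left, List.length_cons, hc,
            A1_cons, A2_cons, A3_cons, reduceIte]
          push_cast
          linear_combination h6
        · simp only [cnt_cons, cnt_nil_left, List.length_cons, hc,
            A1_cons, A2_cons, A3_cons, reduceIte]
          push_cast
          linear_combination h7 + h6
      · have hc : (((T :: w).count S : ℚ)) = (w.count S : ℚ) + (if T = S then 1 else 0) := by
          cases T <;> simp [List.count_cons]
        refine ⟨?_, ?_, ?_, ?_, ?_, ?_, ?_⟩
        · simp only [cnt_cons, cnt_nil_left, List.length_cons, hc,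
            A1_cons, A2_cons, A3_cons, reduceIte]
          push_cast
          linear_combination h1
        · simp only [cnt_cons, cnt_nil_left, List.length_cons, hc,
            A1_cons, A2_cons, A3_cons, reduceIte]
          push_cast
          linear_combination h2
        · simp only [cnt_cons, cnt_nil_left, List.length_cons, hc,
            A1_cons, A2_cons, A3_cons, reduceIte]
          push_cast
          linear_combination h3
        · simp only [cnt_cons, cnt_nil_left, List.length_cons, hc,
            A1_cons, A2_cons, A3_cons, reduceIte]
          push_cast
          linear_combination h4 + h1
        · simp only [cnt_cons, cnt_nil_left, List.length_cons, hc,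
            A1_cons, A2_cons, A3_cons, reduceIte]
          push_cast
          linear_combination h5
        · simp only [cnt_cons, cnt_nil_left, List.length_cons, hc,
            A1_cons, A2_cons, A3_cons, reduceIte]
          push_cast
          linear_combination h6 + h3
        · simp only [cnt_cons, cnt_nil_left, List.length_cons, hc,
            A1_cons, A2_cons, A3_cons, reduceIte]
          push_cast
          linear_combination h7 + h5

lemma icc_sum (n : ℕ) (f : ℕ → ℚ) :
    ∑ k ∈ Finset.Icc 1 n, f k = ∑ k ∈ Finset.range n, f (k+1) := by
  induction n with
  | zero => simp
  | succ n ih =>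
      rw [Finset.sum_Icc_succ_top (by omega), ih, Finset.sum_range_succ]

lemma count_add_count (w : List Letter) : w.count S + w.count T = w.length := by
  induction w with
  | nil => rfl
  | cons x w ih => cases x <;> simp [List.count_cons, ← ih] <;> omega

theorem stmt18 (s t : ℕ) (hs : 0 < s) (ht : 0 < t)
    (w : List Letter) (hS : w.count S = s) (hT : w.count T = t)
    (d : ℕ → ℚ)
    (hd : ∀ k, d k = ((w.take k).count S : ℚ) / s - ((w.take k).count T : ℚ) / t)
    (dbar : ℚ) (hdbar : dbar = (∑ k ∈ Finset.Icc 1 (s + t), d k) / (s + t))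
    (U2 : ℚ)
    (hU2 : U2 = (s * t : ℚ) / ((s + t : ℚ) ^ 2) * ∑ k ∈ Finset.Icc 1 (s + t), (d k - dbar) ^ 2) :
    (s * t * (s + t) : ℚ) / 2 * U2
      = (s * t * (s * t + 2) : ℚ) / 24
        - (cnt [S,T,S,T] w + cnt [T,S,T,S] w : ℚ) / 2 := by
  have hs' : (s : ℚ) ≠ 0 := by positivity
  have ht' : (t : ℚ) ≠ 0 := by positivity
  have hst : ((s : ℚ) + t) ≠ 0 := by positivity
  have hlen : w.length = s + t := by rw [← count_add_count w, hS, hT]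
  -- pointwise description of d on the relevant range
  have hdk : ∀ k ∈ Finset.range (s + t),
      d (k+1) = (((s : ℚ) + t)/((s : ℚ)*t)) * ((w.take (k+1)).count S : ℚ)
        - ((k : ℚ) + 1) * (1/(t : ℚ)) := by
    intro k hk
    have hk' : k + 1 ≤ w.length := by rw [hlen]; exact Finset.mem_range.1 hk
    have hlt : (w.take (k+1)).length = k + 1 := by
      rw [List.length_take]; omega
    have hcc : (w.take (k+1)).count S + (w.take (k+1)).count T = k + 1 := by
      rw [count_add_count, hlt]
    have hccq : ((w.take (k+1)).count T : ℚ) = ((k : ℚ) + 1) - ((w.take (k+1)).count S : ℚ) := by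
      have := congrArg (fun m : ℕ => (m : ℚ)) hcc
      push_cast at this
      linarith
    rw [hd, hccq]
    field_simp
    ring
  have hSd : ∑ k ∈ Finset.Icc 1 (s + t), d k
      = (((s : ℚ) + t)/((s : ℚ)*t)) * A1 w
        - ((s + t : ℚ) * ((s + t : ℚ) + 1) / 2) * (1/(t : ℚ)) := by
    rw [icc_sum, Finset.sum_congr rfl hdk, Finset.sum_sub_distrib, ← Finset.mul_sum,
      ← Finset.sum_mul, gauss, A1_def, hlen]
    push_cast
    ring
  have hdk2 : ∀ k ∈ Finset.range (s + t),
      (d (k+1))^2 = (((s : ℚ) + t)/((s : ℚ)*t))^2 * ((w.take (k+1)).count S : ℚ)^2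
        - (2 * (((s : ℚ) + t)/((s : ℚ)*t)) * (1/(t:ℚ)))
            * (((k : ℚ) + 1) * ((w.take (k+1)).count S : ℚ))
        + ((k : ℚ) + 1)^2 * (1/(t : ℚ)^2) := by
    intro k hk
    rw [hdk k hk]
    field_simp
    ring
  have hSd2 : ∑ k ∈ Finset.Icc 1 (s + t), (d k)^2
      = (((s : ℚ) + t)/((s : ℚ)*t))^2 * A2 w
        - (2 * (((s : ℚ) + t)/((s : ℚ)*t)) * (1/(t:ℚ))) * A3 w
        + ((s + t : ℚ) * ((s + t : ℚ) + 1) * (2 * ((s:ℚ)+t) + 1) / 6) * (1/(t : ℚ)^2) := by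
    rw [icc_sum, Finset.sum_congr rfl hdk2]
    rw [Finset.sum_add_distrib, Finset.sum_sub_distrib, ← Finset.mul_sum, ← Finset.mul_sum,
      ← Finset.sum_mul, gauss2, A2_def, A3_def, hlen]
    push_cast
    ring
  have hvar : ∑ k ∈ Finset.Icc 1 (s + t), (d k - dbar) ^ 2
      = (∑ k ∈ Finset.Icc 1 (s + t), (d k)^2)
        - 2 * dbar * (∑ k ∈ Finset.Icc 1 (s + t), d k) + ((s:ℚ) + t) * dbar^2 := by
    rw [Finset.sum_congr rfl (fun k _ => (by ring :
        (d k - dbar)^2 = (d k)^2 - 2 * dbar * d k + dbar^2)),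
      Finset.sum_add_distrib, Finset.sum_sub_distrib, ← Finset.mul_sum,
      Finset.sum_const, Nat.card_Icc]
    push_cast
    ring
  obtain ⟨-, -, -, -, -, -, k7⟩ := key w
  rw [hS, hlen] at k7
  push_cast at k7 ⊢
  rw [k7, hU2, hvar, hSd, hSd2, hdbar, hSd]
  push_cast
  field_simp
  ring
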